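/- Let X be a real random variable with E[X] = μ, E[(X-μ)²] = σ², and E[(X-μ)⁴] ≤ C₄σ⁴. Let A be an event with P(A) = 1 - γ ≥ 1/2. Then (1 - √(C₄ γ)) σ² ≤ E[(X-μ)² | A] ≤ (1 + 2γ) σ². -/

import Mathlib

open MeasureTheory ProbabilityTheory

theorem stmt_6 {Ω : Type*} [MeasurableSpace Ω] (μ : Measure Ω) [IsProbabilityMeasure μ]
    (X : Ω → ℝ) (hXm : Measurable X)
    (hX4 : Integrable (fun ω => (X ω) ^ 4) μ)
    (m σ C₄ γ : ℝ) (hσ : 0 ≤ σ)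
    (hmean : ∫ ω, X ω ∂μ = m)
    (hvar : ∫ ω, (X ω - m) ^ 2 ∂μ = σ ^ 2)
    (hfourth : ∫ ω, (X ω - m) ^ 4 ∂μ ≤ C₄ * σ ^ 4)
    (A : Set Ω) (hA : MeasurableSet A)
    (hPA : (μ A).toReal = 1 - γ) (hγ : 1 / 2 ≤ 1 - γ) :
    (1 - Real.sqrt (C₄ * γ)) * σ ^ 2 ≤ ∫ ω, (X ω - m) ^ 2 ∂(μ[|A]) ∧
      ∫ ω, (X ω - m) ^ 2 ∂(μ[|A]) ≤ (1 + 2 * γ) * σ ^ 2 := by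
  set Y : Ω → ℝ := fun ω => (X ω - m) ^ 2 with hYdef
  have hYmeas : Measurable Y := (hXm.sub measurable_const).pow_const 2
  have hY4meas : Measurable (fun ω => (X ω - m) ^ 4) :=
    (hXm.sub measurable_const).pow_const 4
  have hY4 : Integrable (fun ω => (X ω - m) ^ 4) μ := by
    refine ((hX4.const_mul 8).add (integrable_const (8 * m ^ 4))).mono
      hY4meas.aestronglyMeasurable ?_
    filter_upwards with ω
    have h1 : (0:ℝ) ≤ (X ω - m) ^ 4 := by positivity
    have h2 : (X ω - m) ^ 4 ≤ 8 * X ω ^ 4 + 8 * m ^ 4 := by nlinarith [sq_nonneg (X ω + m), sq_nonneg (X ω - m), sq_nonneg (X ω * m), sq_nonneg (X ω ^ 2 - m ^ 2), sq_nonneg (X ω ^ 2 + m ^ 2)]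
    rw [Real.norm_of_nonneg h1]
    exact h2.trans (le_abs_self _)
  have hY2 : Integrable Y μ := by
    refine ((integrable_const (1:ℝ)).add hY4).mono hYmeas.aestronglyMeasurable ?_
    filter_upwards with ω
    have h1 : (0:ℝ) ≤ (X ω - m) ^ 2 := sq_nonneg _
    have h2 : (X ω - m) ^ 2 ≤ 1 + (X ω - m) ^ 4 := by nlinarith [sq_nonneg ((X ω - m)^2 - 1)]
    rw [Real.norm_of_nonneg h1]
    exact h2.trans (le_abs_self _)
  -- basic numeric facts
  have hPAle : (μ A).toReal ≤ 1 := by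
    have := (ENNReal.toReal_le_toReal (measure_ne_top μ A) ENNReal.one_ne_top).mpr prob_le_one
    simpa using this
  have hγ0 : 0 ≤ γ := by rw [hPA] at hPAle; linarith
  have hγ1 : 0 < 1 - γ := by linarith
  have hμAc : (μ Aᶜ).toReal = γ := by
    rw [measure_compl hA (measure_ne_top μ A), measure_univ,
      ENNReal.toReal_sub_of_le prob_le_one ENNReal.one_ne_top, ENNReal.toReal_one, hPA]
    ring
  -- split the integral
  have hsplit : (∫ ω in A, Y ω ∂μ) + (∫ ω in Aᶜ, Y ω ∂μ) = σ ^ 2 := by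
    rw [integral_add_compl hA hY2]; exact hvar
  have hAnn : 0 ≤ ∫ ω in A, Y ω ∂μ :=
    setIntegral_nonneg hA fun ω _ => sq_nonneg _
  have hAcnn : 0 ≤ ∫ ω in Aᶜ, Y ω ∂μ :=
    setIntegral_nonneg hA.compl fun ω _ => sq_nonneg _
  -- Cauchy-Schwarz bound on the complement
  have hC4nn : 0 ≤ C₄ * σ ^ 4 := le_trans (integral_nonneg fun ω => by positivity) hfourth
  have hCS : ∫ ω in Aᶜ, Y ω ∂μ ≤ Real.sqrt (C₄ * γ) * σ ^ 2 := by
    set g : Ω → ℝ := Aᶜ.indicator (fun _ => (1:ℝ)) with hgdef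
    have hgnn : ∀ ω, 0 ≤ g ω := fun ω => Set.indicator_nonneg (fun _ _ => zero_le_one) ω
    have hfg : (fun ω => Y ω * g ω) = Aᶜ.indicator Y := by
      funext ω
      by_cases h : ω ∈ Aᶜ <;> simp [hgdef, Set.indicator_apply, h]
    have hYmem : MemLp Y (ENNReal.ofReal 2) μ := by
      rw [show ENNReal.ofReal 2 = 2 by norm_num]
      rw [memLp_two_iff_integrable_sq hYmeas.aestronglyMeasurable]
      have : (fun ω => Y ω ^ 2) = fun ω => (X ω - m) ^ 4 := by
        funext ω; simp only [hYdef]; ring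
      rw [this]; exact hY4
    have hgmem : MemLp g (ENNReal.ofReal 2) μ :=
      memLp_indicator_const _ hA.compl 1 (Or.inr (measure_ne_top μ _))
    have hHolder := integral_mul_le_Lp_mul_Lq_of_nonneg
      (Real.HolderConjugate.two_two : (2:ℝ).HolderConjugate 2) (Filter.Eventually.of_forall fun ω => sq_nonneg (X ω - m))
      (Filter.Eventually.of_forall hgnn) hYmem hgmem
    have h1 : ∫ ω, Y ω * g ω ∂μ = ∫ ω in Aᶜ, Y ω ∂μ := by
      rw [hfg, integral_indicator hA.compl]
    have h2 : (fun ω => Y ω ^ (2:ℝ)) = fun ω => (X ω - m) ^ 4 := by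
      funext ω
      rw [show ((2:ℝ)) = ((2:ℕ):ℝ) by norm_num, Real.rpow_natCast]
      simp only [hYdef]; ring
    have h3 : (fun ω => g ω ^ (2:ℝ)) = g := by
      funext ω
      by_cases h : ω ∈ Aᶜ <;> simp [hgdef, Set.indicator_apply, h, Real.zero_rpow (by norm_num : (2:ℝ) ≠ 0)]
    have h4 : ∫ ω, g ω ∂μ = γ := by
      rw [hgdef, integral_indicator_const _ hA.compl, measureReal_def, hμAc]; simp
    rw [h1, h2, h3, h4] at hHolder
    have h5 : (∫ ω, (X ω - m) ^ 4 ∂μ) ^ ((1:ℝ)/2) ≤ (C₄ * σ ^ 4) ^ ((1:ℝ)/2) :=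
      Real.rpow_le_rpow (integral_nonneg fun ω => by positivity) hfourth (by norm_num)
    have h6 : (C₄ * σ ^ 4) ^ ((1:ℝ)/2) * γ ^ ((1:ℝ)/2) = Real.sqrt (C₄ * γ) * σ ^ 2 := by
      rw [← Real.sqrt_eq_rpow, ← Real.sqrt_eq_rpow, ← Real.sqrt_mul hC4nn γ,
        show C₄ * σ ^ 4 * γ = (σ ^ 2) ^ 2 * (C₄ * γ) by ring,
        Real.sqrt_mul (sq_nonneg (σ ^ 2)), Real.sqrt_sq (sq_nonneg σ)]
      ring
    calc ∫ ω in Aᶜ, Y ω ∂μ ≤ (∫ ω, (X ω - m) ^ 4 ∂μ) ^ ((1:ℝ)/2) * γ ^ ((1:ℝ)/2) := hHolder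
      _ ≤ (C₄ * σ ^ 4) ^ ((1:ℝ)/2) * γ ^ ((1:ℝ)/2) := by
          apply mul_le_mul_of_nonneg_right h5 (Real.rpow_nonneg hγ0 _)
      _ = Real.sqrt (C₄ * γ) * σ ^ 2 := h6
  -- conditional integral
  have hcond : ∫ ω, Y ω ∂(μ[|A]) = (1 - γ)⁻¹ * ∫ ω in A, Y ω ∂μ := by
    rw [ProbabilityTheory.cond, integral_smul_measure, ENNReal.toReal_inv, hPA, smul_eq_mul]
  constructor
  · rw [hcond]
    rcases le_or_gt ((1 - Real.sqrt (C₄ * γ)) * σ ^ 2) 0 with h | h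
    · exact h.trans (by positivity)
    · have hAint : (1 - Real.sqrt (C₄ * γ)) * σ ^ 2 ≤ ∫ ω in A, Y ω ∂μ := by nlinarith
      calc (1 - Real.sqrt (C₄ * γ)) * σ ^ 2 ≤ ∫ ω in A, Y ω ∂μ := hAint
        _ = 1 * ∫ ω in A, Y ω ∂μ := (one_mul _).symm
        _ ≤ (1 - γ)⁻¹ * ∫ ω in A, Y ω ∂μ := by
            apply mul_le_mul_of_nonneg_right _ hAnn
            have h7 : (1 - γ) * (1 - γ)⁻¹ = 1 := mul_inv_cancel₀ hγ1.ne'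
            nlinarith [inv_nonneg.mpr hγ1.le]
  · rw [hcond]
    have hup : ∫ ω in A, Y ω ∂μ ≤ σ ^ 2 := by linarith
    have key : (1 - γ)⁻¹ * ∫ ω in A, Y ω ∂μ ≤ (1 - γ)⁻¹ * σ ^ 2 := by
      apply mul_le_mul_of_nonneg_left hup (by positivity)
    refine key.trans ?_
    rw [inv_mul_le_iff₀ hγ1]
    nlinarith [mul_nonneg (mul_nonneg hγ0 (by linarith : (0:ℝ) ≤ 1 - 2 * γ)) (sq_nonneg σ)]
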